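/- (Proposition 1.) Let K be a compact convex subset of a finite-dimensional real normed vector space E and let f : E → ℝ be continuous on K and convex on K. Define G : K → ℝ by G(x) := sup{ ∑ q_i f(e_i) : k ∈ ℕ, e_i ∈ extremePoints(K), q_i ≥ 0, ∑ q_i = 1, ∑ q_i e_i = x }. Then G is continuous on the interior of K. -/

import Mathlib

open scoped BigOperators
open Set

section Aux

variable {E : Type*} [NormedAddCommGroup E] [NormedSpace ℝ E]

/-- The set of achievable values in the guessing-probability sup. -/
def Sset (K : Set E) (f : E → ℝ) (x : E) : Set ℝ :=
  {r : ℝ | ∃ (k : ℕ) (e : Fin k → E) (q : Fin k → ℝ),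
    (∀ i, e i ∈ Set.extremePoints ℝ K) ∧ (∀ i, 0 ≤ q i) ∧ ∑ i, q i = 1 ∧
    ∑ i, q i • e i = x ∧ ∑ i, q i * f (e i) = r}

lemma Sset_combo_mem (K : Set E) (f : E → ℝ) {x y : E} {r₁ r₂ a b : ℝ}
    (ha : 0 ≤ a) (hb : 0 ≤ b) (hab : a + b = 1)
    (h₁ : r₁ ∈ Sset K f x) (h₂ : r₂ ∈ Sset K f y) :
    a * r₁ + b * r₂ ∈ Sset K f (a • x + b • y) := by
  obtain ⟨k₁, e₁, q₁, he₁, hq₁, hs₁, hx₁, hr₁⟩ := h₁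
  obtain ⟨k₂, e₂, q₂, he₂, hq₂, hs₂, hx₂, hr₂⟩ := h₂
  refine ⟨k₁ + k₂, Fin.append e₁ e₂,
    Fin.append (fun i => a * q₁ i) (fun i => b * q₂ i), ?_, ?_, ?_, ?_, ?_⟩
  · intro i
    cases i using Fin.addCases with
    | left j => simpa [Fin.append_left] using he₁ j
    | right j => simpa [Fin.append_right] using he₂ j
  · intro i
    cases i using Fin.addCases with
    | left j => simpa [Fin.append_left] using mul_nonneg ha (hq₁ j)
    | right j => simpa [Fin.append_right] using mul_nonneg hb (hq₂ j)
  · rw [Fin.sum_univ_add]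
    simp only [Fin.append_left, Fin.append_right, ← Finset.mul_sum, hs₁, hs₂]
    simpa using hab
  · rw [Fin.sum_univ_add]
    simp only [Fin.append_left, Fin.append_right, mul_smul, ← Finset.smul_sum, hx₁, hx₂]
  · rw [Fin.sum_univ_add]
    simp only [Fin.append_left, Fin.append_right, mul_assoc, ← Finset.mul_sum, hr₁, hr₂]

lemma Sset_nonempty (K : Set E) (f : E → ℝ) {x : E}
    (hx : x ∈ convexHull ℝ (K.extremePoints ℝ)) : (Sset K f x).Nonempty := by
  rw [mem_convexHull_iff_exists_fintype] at hx
  obtain ⟨ι, hι, w, z, hw0, hw1, hz, hxx⟩ := hx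
  let e := Fintype.equivFin ι
  refine ⟨∑ i, w i * f (z i), Fintype.card ι, z ∘ e.symm, w ∘ e.symm,
    fun i => hz _, fun i => hw0 _, ?_, ?_, ?_⟩
  · exact (Equiv.sum_comp e.symm w).trans hw1
  · exact (Equiv.sum_comp e.symm (fun i => w i • z i)).trans hxx
  · exact Equiv.sum_comp e.symm (fun i => w i * f (z i))

lemma Sset_bddAbove (K : Set E) (f : E → ℝ) {M : ℝ} (hM : ∀ w ∈ K, f w ≤ M) (x : E) :
    Sset K f x ⊆ Set.Iic M := by
  rintro r ⟨k, e, q, he, hq, hs, hx, rfl⟩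
  have : ∑ i, q i * f (e i) ≤ ∑ i, q i * M := by
    refine Finset.sum_le_sum fun i _ => ?_
    exact mul_le_mul_of_nonneg_left (hM _ (extremePoints_subset (he i))) (hq i)
  simpa [← Finset.sum_mul, hs] using this

end Aux

-- interior points of a compact convex set lie in the convex hull of extreme points
lemma mem_convexHull_extremePoints_of_mem_interior
    {E : Type*} [NormedAddCommGroup E] [NormedSpace ℝ E] [FiniteDimensional ℝ E]
    {K : Set E} (hKc : IsCompact K) (hKconv : Convex ℝ K)
    {x : E} (hx : x ∈ interior K) : x ∈ convexHull ℝ (K.extremePoints ℝ) := by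
  set C := convexHull ℝ (K.extremePoints ℝ) with hC
  have hCconv : Convex ℝ C := convex_convexHull ℝ _
  have hclos : closure C = K := closure_convexHull_extremePoints hKc hKconv
  have hKspan : affineSpan ℝ K = ⊤ :=
    (hKconv.interior_nonempty_iff_affineSpan_eq_top).1 ⟨x, hx⟩
  have hCspan : affineSpan ℝ C = ⊤ := by
    refine top_unique ?_
    rw [← hKspan, affineSpan_le]
    have : K ⊆ (affineSpan ℝ C : Set E) := by
      rw [← hclos]
      have hcl : IsClosed (affineSpan ℝ C : Set E) :=
        (affineSpan ℝ C).closed_of_finiteDimensional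
      exact closure_minimal (subset_affineSpan ℝ C) hcl
    exact this
  obtain ⟨y, hy⟩ := (hCconv.interior_nonempty_iff_affineSpan_eq_top).2 hCspan
  obtain ⟨ε, hε, hball⟩ := Metric.isOpen_iff.1 isOpen_interior x hx
  by_cases hxy : x = y
  · exact hxy ▸ interior_subset hy
  have hnorm : 0 < ‖x - y‖ := by simp [sub_eq_zero, hxy]
  set t : ℝ := ε / (2 * ‖x - y‖) with ht
  have htpos : 0 < t := by positivity
  have hz : x + t • (x - y) ∈ K := by
    apply interior_subset
    apply hball
    rw [Metric.mem_ball, dist_eq_norm]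
    have : x + t • (x - y) - x = t • (x - y) := by abel
    rw [this, norm_smul, Real.norm_eq_abs, abs_of_pos htpos, ht]
    rw [div_mul_eq_mul_div, mul_comm]
    rw [div_lt_iff₀ (by positivity)]
    nlinarith
  set z := x + t • (x - y) with hzdef
  have hxcombo : (1 / (1 + t)) • z + (t / (1 + t)) • y = x := by
    have h1t : (1 : ℝ) + t ≠ 0 := by positivity
    rw [hzdef]
    match_scalars <;> field_simp <;> ring
  have := hCconv.combo_closure_interior_mem_interior
    (hclos ▸ hz : z ∈ closure C) hy
    (a := 1 / (1 + t)) (b := t / (1 + t)) (by positivity) (by positivity)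
    (by field_simp)
  rw [hxcombo] at this
  exact interior_subset this

theorem guessing_probability_continuous_on_interior
    {E : Type*} [NormedAddCommGroup E] [NormedSpace ℝ E] [FiniteDimensional ℝ E]
    (K : Set E) (hKc : IsCompact K) (hKconv : Convex ℝ K)
    (f : E → ℝ) (hf : ContinuousOn f K) (hfconv : ConvexOn ℝ K f)
    (G : E → ℝ)
    (hG : ∀ x : E, G x =
      sSup {r : ℝ | ∃ (k : ℕ) (e : Fin k → E) (q : Fin k → ℝ),
        (∀ i, e i ∈ Set.extremePoints ℝ K) ∧ (∀ i, 0 ≤ q i) ∧ ∑ i, q i = 1 ∧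
        ∑ i, q i • e i = x ∧ ∑ i, q i * f (e i) = r}) :
    ContinuousOn G (interior K) := by
  have hG' : ∀ x : E, G x = sSup (Sset K f x) := hG
  have hconc : ConcaveOn ℝ (interior K) G := by
    refine ⟨hKconv.interior, ?_⟩
    intro x hx y hy a b ha hb hab
    rcases ha.eq_or_lt with rfl | ha'
    · have hb1 : b = 1 := by linarith
      simp [hb1]
    rcases hb.eq_or_lt with rfl | hb'
    · have ha1 : a = 1 := by linarith
      simp [ha1]
    -- both positive
    obtain ⟨M, hM⟩ : ∃ M, ∀ w ∈ K, f w ≤ M := by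
      obtain ⟨M, hM⟩ := (hKc.bddAbove_image hf)
      exact ⟨M, fun w hw => hM (Set.mem_image_of_mem f hw)⟩
    have hBdd : ∀ w : E, BddAbove (Sset K f w) :=
      fun w => ⟨M, fun r hr => Sset_bddAbove K f hM w hr⟩
    have hxS : (Sset K f x).Nonempty :=
      Sset_nonempty K f (mem_convexHull_extremePoints_of_mem_interior hKc hKconv hx)
    have hyS : (Sset K f y).Nonempty :=
      Sset_nonempty K f (mem_convexHull_extremePoints_of_mem_interior hKc hKconv hy)
    set z := a • x + b • y with hz
    have key : ∀ r₁ ∈ Sset K f x, ∀ r₂ ∈ Sset K f y,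
        a * r₁ + b * r₂ ≤ sSup (Sset K f z) := fun r₁ h₁ r₂ h₂ =>
      le_csSup (hBdd z) (Sset_combo_mem K f ha hb hab h₁ h₂)
    have step1 : ∀ r₁ ∈ Sset K f x, a * r₁ + b * sSup (Sset K f y) ≤ sSup (Sset K f z) := by
      intro r₁ h₁
      have h2 : sSup (Sset K f y) ≤ (sSup (Sset K f z) - a * r₁) / b := by
        refine csSup_le hyS fun r₂ h₂ => ?_
        rw [le_div_iff₀ hb']
        have := key r₁ h₁ r₂ h₂
        linarith
      rw [le_div_iff₀ hb'] at h2
      linarith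
    have step2 : a * sSup (Sset K f x) + b * sSup (Sset K f y) ≤ sSup (Sset K f z) := by
      have h2 : sSup (Sset K f x) ≤ (sSup (Sset K f z) - b * sSup (Sset K f y)) / a := by
        refine csSup_le hxS fun r₁ h₁ => ?_
        rw [le_div_iff₀ ha']
        have := step1 r₁ h₁
        linarith
      rw [le_div_iff₀ ha'] at h2
      linarith
    simpa [hG', smul_eq_mul] using step2
  exact hconc.continuousOn isOpen_interior
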